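/- arXiv:1911.04204 — 9 statements merged into one kernel-verified Lean document; each statement's English description precedes it below -/
import Mathlib

section
/- Let C be a commutative ring (algebra over a field F) and p = Σ_{i=0}^n c_i x^i a polynomial in C[x]. If p^k = p for some k ≥ 2 such that char(F) does not divide k−1, then p is constant (c_i = 0 for all i ≥ 1). -/
/-- If `C` is a commutative algebra over a field `F`, `p ∈ C[x]` satisfies `p^k = p` for some
`k ≥ 2` with `char F ∤ (k-1)` (i.e. `k-1 ≠ 0` in `F`), then `p` is constant. -/
theorem stmt_0 {F C : Type*} [Field F] [CommRing C] [Algebra F C]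
    (p : Polynomial C) (k : ℕ) (hk : 2 ≤ k)
    (hchar : ((k - 1 : ℕ) : F) ≠ 0)
    (hp : p ^ k = p) :
    ∀ i : ℕ, 1 ≤ i → p.coeff i = 0 := by
  -- (k-1) is a unit in C
  have hUnitC : IsUnit ((k - 1 : ℕ) : C) := by
    have h1 : IsUnit ((k - 1 : ℕ) : F) := isUnit_iff_ne_zero.mpr hchar
    have := h1.map (algebraMap F C)
    rwa [map_natCast] at this
  -- coefficients of degree ≥ 1 are nilpotent
  have hnil : ∀ i : ℕ, 1 ≤ i → IsNilpotent (p.coeff i) := by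
    intro i hi
    rw [← mem_nilradical, nilradical_eq_sInf, Ideal.mem_sInf]
    intro J hJ
    haveI : J.IsPrime := hJ
    set q := p.map (Ideal.Quotient.mk J) with hqdef
    have hq : q ^ k = q := by rw [hqdef, ← Polynomial.map_pow, hp]
    have hq0 : q.coeff i = 0 := by
      rcases eq_or_ne q 0 with h0 | h0
      · simp [h0]
      · have h1 : q ^ (k - 1) * q = 1 * q := by
          rw [one_mul, ← pow_succ, Nat.sub_add_cancel (by omega)]
          exact hq
        have h1' : q ^ (k - 1) = 1 := mul_right_cancel₀ h0 h1
        have hu : IsUnit q := by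
          apply IsUnit.of_mul_eq_one (q ^ (k - 2))
          rw [← pow_succ']
          rw [show k - 2 + 1 = k - 1 by omega]
          exact h1'
        obtain ⟨r, -, hrq⟩ := Polynomial.isUnit_iff.mp hu
        rw [← hrq, Polynomial.coeff_C, if_neg (by omega)]
    rw [Polynomial.coeff_map] at hq0
    exact Ideal.Quotient.eq_zero_iff_mem.mp hq0
  set a : Polynomial C := Polynomial.C (p.coeff 0) with hadef
  set n : Polynomial C := p - a with hndef
  have hn : IsNilpotent n := by
    rw [Polynomial.isNilpotent_iff]
    intro j
    rcases Nat.eq_zero_or_pos j with rfl | hj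
    · simp [hndef, hadef]
    · have := hnil j hj
      simpa [hndef, hadef, Polynomial.coeff_C, Nat.pos_iff_ne_zero.mp hj] using this
  -- a ^ k = a
  have hc0 : p.coeff 0 ^ k = p.coeff 0 := by
    have h := congrArg Polynomial.constantCoeff hp
    simp only [map_pow] at h
    simpa [Polynomial.constantCoeff_apply] using h
  have ha : a ^ k = a := by rw [hadef, ← Polynomial.C_pow, hc0]
  -- binomial expansion: n = n * u
  have hpa : p = n + a := by rw [hndef]; ring
  set u : Polynomial C :=
    ∑ i ∈ Finset.range k, n ^ i * a ^ (k - (i + 1)) * (k.choose (i + 1) : Polynomial C) with hudef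
  have hnu : n = n * u := by
    have hexp : (n + a) ^ k =
        (∑ i ∈ Finset.range k, n ^ (i + 1) * a ^ (k - (i + 1)) * (k.choose (i + 1) : Polynomial C))
          + n ^ 0 * a ^ (k - 0) * (k.choose 0 : Polynomial C) := by
      rw [add_pow, Finset.sum_range_succ']
    have hkey : n + a = n * u + a := by
      calc n + a = (n + a) ^ k := by rw [← hpa, hp]
        _ = (∑ i ∈ Finset.range k, n ^ (i + 1) * a ^ (k - (i + 1)) * (k.choose (i + 1) : Polynomial C))
            + n ^ 0 * a ^ (k - 0) * (k.choose 0 : Polynomial C) := hexp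
        _ = n * u + a := by
            rw [hudef, Finset.mul_sum]
            simp only [pow_zero, Nat.choose_zero_right, Nat.cast_one, one_mul, mul_one,
              Nat.sub_zero, ha]
            congr 1
            refine Finset.sum_congr rfl fun i _ => ?_
            ring
    exact add_right_cancel hkey
  -- u = n * w + k * e with e = a^(k-1)
  set e : Polynomial C := a ^ (k - 1) with hedef
  have he : e * e = e := by
    rw [hedef, ← pow_add, show k - 1 + (k - 1) = k + (k - 2) by omega, pow_add, ha,
      ← pow_succ', show k - 2 + 1 = k - 1 by omega]
  set w : Polynomial C :=
    ∑ i ∈ Finset.range (k - 1), n ^ i * a ^ (k - (i + 2)) * (k.choose (i + 2) : Polynomial C)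
    with hwdef
  have huw : u = n * w + (k : Polynomial C) * e := by
    rw [hudef, show k = (k - 1) + 1 by omega, Finset.sum_range_succ']
    rw [hwdef, Finset.mul_sum]
    simp only [pow_zero, one_mul, Nat.choose_one_right]
    rw [show (k - 1 + 1 : ℕ) = k by omega]
    refine congrArg₂ (· + ·) ?_ ?_
    · refine Finset.sum_congr rfl fun i _ => ?_
      rw [show k - (i + 1 + 1) = k - (i + 2) by omega]
      ring
    · simp only [zero_add, Nat.choose_one_right, hedef]
      ring
  -- 1 - k * e is a unit
  obtain ⟨tu, htu⟩ := hUnitC.map (Polynomial.C : C →+* Polynomial C)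
  have htu' : IsUnit ((k - 1 : ℕ) : Polynomial C) := by
    rw [← map_natCast (Polynomial.C : C →+* Polynomial C)]; exact ⟨tu, htu⟩
  obtain ⟨t, ht⟩ := htu'.exists_left_inv
  have ht' : t * ((k : Polynomial C) - 1) = 1 := by
    rwa [Nat.cast_sub (by omega), Nat.cast_one] at ht
  have hv : (1 - (k : Polynomial C) * e) * (1 - (k : Polynomial C) * t * e) = 1 := by
    linear_combination ((k : Polynomial C) ^ 2 * t) * he + (k : Polynomial C) * e * ht'
  have hvu : IsUnit (1 - (k : Polynomial C) * e) := IsUnit.of_mul_eq_one _ hv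
  -- 1 - u is a unit
  have hnw : IsNilpotent (-(n * w)) := by
    obtain ⟨m, hm⟩ := hn
    exact ⟨m, by rw [neg_pow, mul_pow, hm, zero_mul, mul_zero]⟩
  have h1u : IsUnit (1 - u) := by
    have heq : 1 - u = -(n * w) + (1 - (k : Polynomial C) * e) := by rw [huw]; ring
    rw [heq]
    exact hnw.isUnit_add_right_of_commute hvu (Commute.all _ _)
  -- conclude n = 0
  have hn0 : n * (1 - u) = 0 := by rw [mul_sub, ← hnu, mul_one, sub_self]
  have hnz : n = 0 := by
    obtain ⟨v0, hv0⟩ := h1u.exists_right_inv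
    calc n = n * ((1 - u) * v0) := by rw [hv0, mul_one]
      _ = n * (1 - u) * v0 := by ring
      _ = 0 := by rw [hn0, zero_mul]
  intro i hi
  have : p = a := by rw [← sub_eq_zero, ← hndef]; exact hnz
  rw [this, hadef, Polynomial.coeff_C, if_neg (by omega)]
end

section
/- Let C be a unital commutative ring with no nonzero nilpotent elements and let p ∈ C[x] be a root of a nonzero polynomial with coefficients in a field F ⊆ C. Then p is constant. -/
open Polynomial

lemma aux {F D : Type*} [Field F] [CommRing D] [IsDomain D] [Algebra F D]
    (p : D[X]) (q : F[X]) (hq : q ≠ 0) (hroot : Polynomial.aeval p q = 0) :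
    p.natDegree = 0 := by
  have hinj : Function.Injective (algebraMap F D) := (algebraMap F D).injective
  set q' : D[X] := q.map (algebraMap F D) with hq'
  have hq'ne : q' ≠ 0 := Polynomial.map_ne_zero hq
  have hcomp : q'.comp p = Polynomial.aeval p q := by
    rw [comp_eq_aeval, hq']
    show eval₂ Polynomial.C p (q.map (algebraMap F D)) = _
    rw [eval₂_map]
    rfl
  rw [hroot] at hcomp
  by_contra hne
  rcases Nat.eq_zero_or_pos q'.natDegree with h0 | hpos
  · have : q' = Polynomial.C (q'.coeff 0) := Polynomial.eq_C_of_natDegree_eq_zero h0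
    rw [this] at hcomp
    simp at hcomp
    apply hq'ne
    rw [this, hcomp]; simp
  · have := Polynomial.natDegree_comp (p := q') (q := p)
    rw [hcomp] at this
    simp at this
    rcases this with h | h
    · omega
    · exact hne h

/-- If `C` is a reduced commutative unital algebra over a field `F` and `p ∈ C[x]` is a root of a
nonzero polynomial with coefficients in `F`, then `p` is constant. -/
theorem stmt_1 {F C : Type*} [Field F] [CommRing C] [IsReduced C] [Algebra F C]
    (p : Polynomial C) (q : Polynomial F) (hq : q ≠ 0)
    (hroot : Polynomial.aeval p q = 0) :
    ∀ i : ℕ, 1 ≤ i → p.coeff i = 0 := by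
  intro i hi
  have hnil : p.coeff i ∈ nilradical C := by
    rw [nilradical_eq_sInf]
    apply Ideal.mem_sInf.2
    intro P hP
    haveI : P.IsPrime := hP
    have key : (p.map (Ideal.Quotient.mk P)).natDegree = 0 := by
      apply aux (F := F) (p.map (Ideal.Quotient.mk P)) q hq
      have := Polynomial.aeval_algHom_apply
        (Polynomial.mapAlgHom (Ideal.Quotient.mkₐ F P)) p q
      simp [hroot, Ideal.Quotient.mkₐ_eq_mk] at this
      exact this
    have : (p.map (Ideal.Quotient.mk P)).coeff i = 0 :=
      Polynomial.coeff_eq_zero_of_natDegree_lt (by omega)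
    rw [Polynomial.coeff_map] at this
    exact Ideal.Quotient.eq_zero_iff_mem.mp this
  rw [nilradical_eq_zero] at hnil
  simpa using hnil
end

section
/- Let F be a functor from a category of algebras A (closed under polynomial extensions A ↦ A[x]) to a category C. If for every algebra A the maps F(p₀), F(p₁) : F(A[x]) → F(A), induced by the evaluations x ↦ 0 and x ↦ 1, are equal, then for every algebra A the map F(e) : F(A) → F(A[x]) induced by the inclusion a ↦ a is an isomorphism, with inverse F(p₀). -/
open CategoryTheory Polynomial

universe u v w

/-- The polynomial extension `A[x]` of an algebra `A`, as an object of `AlgebraCat F`. -/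
noncomputable def polyExt {F : Type u} [Field F] (A : AlgCat.{u} F) : AlgCat.{u} F :=
  AlgCat.of F (Polynomial A)

/-- The evaluation morphism `p₀ : A[x] → A`, `x ↦ 0`. -/
noncomputable def pEval0 {F : Type u} [Field F] (A : AlgCat.{u} F) : polyExt A ⟶ A :=
  AlgCat.ofHom
    (Polynomial.eval₂AlgHom (AlgHom.id F ↥A) 0 fun a => Commute.zero_right a)

/-- The evaluation morphism `p₁ : A[x] → A`, `x ↦ 1`. -/
noncomputable def pEval1 {F : Type u} [Field F] (A : AlgCat.{u} F) : polyExt A ⟶ A :=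
  AlgCat.ofHom
    (Polynomial.eval₂AlgHom (AlgHom.id F ↥A) 1 fun a => Commute.one_right a)

/-- The canonical embedding `e : A → A[x]`. -/
noncomputable def pEmb {F : Type u} [Field F] (A : AlgCat.{u} F) : A ⟶ polyExt A :=
  AlgCat.ofHom (Polynomial.CAlgHom (R := F) (A := ↥A))

/-- The elementary homotopy `H : A[x] → (A[x])[y]`, `p(x) ↦ p(xy)`. -/
noncomputable def pHomotopy {F : Type u} [Field F] (A : AlgCat.{u} F) :
    polyExt A ⟶ polyExt (polyExt A) :=
  AlgCat.ofHom
    (Polynomial.eval₂AlgHom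
      (Polynomial.CAlgHom.comp (Polynomial.CAlgHom (R := F) (A := ↥A)))
      (Polynomial.C Polynomial.X * Polynomial.X)
      (fun a => by
        exact Commute.mul_right
          (((Polynomial.commute_X (Polynomial.C a)).map
            (Polynomial.C : Polynomial ↥A →+* Polynomial (Polynomial ↥A))).symm)
          ((Polynomial.commute_X _).symm)))

lemma eval₂AlgHom'_apply'' {R A B : Type*} [CommSemiring R] [Semiring A] [Semiring B]
    [Algebra R A] [Algebra R B] (f : A →ₐ[R] B) (b : B) (hf : ∀ a, Commute (f a) b)
    (p : Polynomial A) :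
    Polynomial.eval₂AlgHom f b hf p = Polynomial.eval₂ f b p := rfl

lemma pEmb_comp_pEval0 {F : Type u} [Field F] (A : AlgCat.{u} F) :
    pEmb A ≫ pEval0 A = 𝟙 A := by
  ext a
  simp only [pEmb, pEval0, AlgCat.hom_comp, AlgCat.hom_ofHom, AlgHom.coe_comp,
    Function.comp_apply, AlgCat.hom_id, AlgHom.coe_id, id_eq, eval₂AlgHom'_apply'',
    Polynomial.CAlgHom_apply, Polynomial.eval₂_C, AlgHom.id_apply]
  show Polynomial.eval₂ ((AlgHom.id F ↥A : ↥A →ₐ[F] ↥A) : ↥A →+* ↥A) 0 (Polynomial.C a) = a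
  rw [Polynomial.eval₂_C]
  rfl

lemma pHomotopy_comp_pEval0 {F : Type u} [Field F] (A : AlgCat.{u} F) :
    pHomotopy A ≫ pEval0 (polyExt A) = pEval0 A ≫ pEmb A := by
  ext p
  induction p using Polynomial.induction_on' with
  | add p q hp hq =>
    change Polynomial.eval₂ (RingHom.id (Polynomial ↥A)) 0 (Polynomial.eval₂ (Polynomial.C.comp Polynomial.C) (Polynomial.C Polynomial.X * Polynomial.X) p) = Polynomial.C (Polynomial.eval₂ (RingHom.id ↥A) 0 p) at hp
    change Polynomial.eval₂ (RingHom.id (Polynomial ↥A)) 0 (Polynomial.eval₂ (Polynomial.C.comp Polynomial.C) (Polynomial.C Polynomial.X * Polynomial.X) q) = Polynomial.C (Polynomial.eval₂ (RingHom.id ↥A) 0 q) at hq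
    change Polynomial.eval₂ (RingHom.id (Polynomial ↥A)) 0 (Polynomial.eval₂ (Polynomial.C.comp Polynomial.C) (Polynomial.C Polynomial.X * Polynomial.X) (p + q)) = Polynomial.C (Polynomial.eval₂ (RingHom.id ↥A) 0 (p + q))
    rw [Polynomial.eval₂_add, Polynomial.eval₂_add, hp, hq, Polynomial.eval₂_add, map_add]
  | monomial n a =>
    change Polynomial.eval₂ (RingHom.id (Polynomial ↥A)) 0 (Polynomial.eval₂ (Polynomial.C.comp Polynomial.C) (Polynomial.C Polynomial.X * Polynomial.X) (Polynomial.monomial n a)) = Polynomial.C (Polynomial.eval₂ (RingHom.id ↥A) 0 (Polynomial.monomial n a))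
    simp only [Polynomial.eval₂_monomial, RingHom.coe_comp, Function.comp_apply, mul_pow]
    cases n <;> simp [pow_succ, ← mul_assoc, Polynomial.eval₂_at_zero,
      Polynomial.coeff_mul_X_zero]

lemma pHomotopy_comp_pEval1 {F : Type u} [Field F] (A : AlgCat.{u} F) :
    pHomotopy A ≫ pEval1 (polyExt A) = 𝟙 (polyExt A) := by
  ext p
  induction p using Polynomial.induction_on' with
  | add p q hp hq =>
    change Polynomial.eval₂ (RingHom.id (Polynomial ↥A)) 1 (Polynomial.eval₂ (Polynomial.C.comp Polynomial.C) (Polynomial.C Polynomial.X * Polynomial.X) p) = p at hp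
    change Polynomial.eval₂ (RingHom.id (Polynomial ↥A)) 1 (Polynomial.eval₂ (Polynomial.C.comp Polynomial.C) (Polynomial.C Polynomial.X * Polynomial.X) q) = q at hq
    change Polynomial.eval₂ (RingHom.id (Polynomial ↥A)) 1 (Polynomial.eval₂ (Polynomial.C.comp Polynomial.C) (Polynomial.C Polynomial.X * Polynomial.X) (p + q)) = p + q
    rw [Polynomial.eval₂_add, Polynomial.eval₂_add, hp, hq]
  | monomial n a =>
    change Polynomial.eval₂ (RingHom.id (Polynomial ↥A)) 1 (Polynomial.eval₂ (Polynomial.C.comp Polynomial.C) (Polynomial.C Polynomial.X * Polynomial.X) (Polynomial.monomial n a)) = Polynomial.monomial n a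
    simp only [Polynomial.eval₂_monomial, RingHom.coe_comp, Function.comp_apply]
    show Polynomial.eval₂ (RingHom.id (Polynomial ↥A)) 1
      (Polynomial.C (Polynomial.C a) * (Polynomial.C Polynomial.X * Polynomial.X) ^ n) =
      Polynomial.monomial n a
    rw [(Polynomial.commute_X (Polynomial.C (Polynomial.X (R := ↥A)))).symm.mul_pow,
      ← Polynomial.C_pow, ← mul_assoc, ← map_mul]
    rw [show (Polynomial.eval₂ (RingHom.id _) (1 : Polynomial ↥A)
        (Polynomial.C (Polynomial.C a * Polynomial.X ^ n) * Polynomial.X ^ n) :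
        Polynomial ↥A) = Polynomial.eval 1
        (Polynomial.C (Polynomial.C a * Polynomial.X ^ n) * Polynomial.X ^ n) from rfl]
    rw [Polynomial.eval_C_mul]
    simp [Polynomial.X_pow_eq_monomial, Polynomial.eval_monomial,
      Polynomial.C_mul_X_pow_eq_monomial]

/-- If a functor `G` on the category of `F`-algebras identifies the two evaluation morphisms
`p₀, p₁ : A[x] → A` (at `x = 0` and `x = 1`) for every algebra `A`, then for every `A` the map
`G(e) : G(A) → G(A[x])` induced by the embedding `e : A → A[x]` is an isomorphism with inverse
`G(p₀)`. -/
theorem stmt_6 {F : Type u} [Field F] {C : Type v} [Category.{w} C]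
    (G : AlgCat.{u} F ⥤ C)
    (h : ∀ A : AlgCat.{u} F, G.map (pEval0 A) = G.map (pEval1 A)) :
    ∀ A : AlgCat.{u} F,
      G.map (pEmb A) ≫ G.map (pEval0 A) = 𝟙 (G.obj A) ∧
      G.map (pEval0 A) ≫ G.map (pEmb A) = 𝟙 (G.obj (polyExt A)) := by
  intro A
  constructor
  · rw [← G.map_comp, pEmb_comp_pEval0, G.map_id]
  · calc G.map (pEval0 A) ≫ G.map (pEmb A)
        = G.map (pEval0 A ≫ pEmb A) := (G.map_comp _ _).symm
      _ = G.map (pHomotopy A ≫ pEval0 (polyExt A)) := by rw [pHomotopy_comp_pEval0]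
      _ = G.map (pHomotopy A) ≫ G.map (pEval0 (polyExt A)) := G.map_comp _ _
      _ = G.map (pHomotopy A) ≫ G.map (pEval1 (polyExt A)) := by rw [h]
      _ = G.map (pHomotopy A ≫ pEval1 (polyExt A)) := (G.map_comp _ _).symm
      _ = 𝟙 _ := by rw [pHomotopy_comp_pEval1, G.map_id]
end

section
/- Let A be a nonunital algebra over a field F (possibly noncommutative). For every nonzero a ∈ A there exists an algebra C and an algebra morphism φ : A → C[x] such that φ(a) is not a constant polynomial. Concretely, the map a ↦ E₁₁(a) + E₁₂(a)·x into M₂(A)[x], where E₁₁(a) is the matrix with a in the (1,1)-entry and E₁₂(a) has a in the (1,2)-entry and zeros elsewhere, is an algebra homomorphism sending every nonzero a to a nonconstant polynomial. -/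
open Polynomial Matrix

universe u v

/-- The map `a ↦ E₁₁(a) + E₁₂(a)·x` from a nonunital algebra `A` into `M₂(A)[x]`
(matrices taken over the unitization of `A` so that polynomials make sense). -/
noncomputable def stdMap {F : Type u} {A : Type v} [Field F] [NonUnitalRing A] [Module F A]
    [SMulCommClass F A A] [IsScalarTower F A A] (a : A) :
    Polynomial (Matrix (Fin 2) (Fin 2) (Unitization F A)) :=
  C (Matrix.single 0 0 (Unitization.inr a)) +
    C (Matrix.single 0 1 (Unitization.inr a)) * X

section aux

variable {F : Type u} {A : Type v} [Field F] [NonUnitalRing A] [Module F A]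
    [SMulCommClass F A A] [IsScalarTower F A A]

theorem stdMap_add (a b : A) :
    stdMap (F := F) (a + b) = stdMap (F := F) a + stdMap (F := F) b := by
  simp only [stdMap, Unitization.inr_add, single_add, map_add, add_mul]
  abel

theorem stdMap_mul (a b : A) :
    stdMap (F := F) (a * b) = stdMap (F := F) a * stdMap (F := F) b := by
  have h01 : (1 : Fin 2) ≠ 0 := by decide
  have CCX : ∀ p q : Matrix (Fin 2) (Fin 2) (Unitization F A),
      C p * (C q * X) = C (p * q) * X := fun p q => by rw [← mul_assoc, ← C_mul]
  have CXC : ∀ p q : Matrix (Fin 2) (Fin 2) (Unitization F A),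
      C p * X * C q = C (p * q) * X := fun p q => by
    rw [mul_assoc, X_mul_C, ← mul_assoc, ← C_mul]
  have CXCX : ∀ p q : Matrix (Fin 2) (Fin 2) (Unitization F A),
      C p * X * (C q * X) = C (p * q) * (X * X) := fun p q => by
    rw [← mul_assoc, CXC, mul_assoc]
  simp only [stdMap, Unitization.inr_mul]
  rw [add_mul, mul_add, mul_add, ← C_mul, CCX, CXC, CXCX,
    single_mul_single_same, single_mul_single_same,
    single_mul_single_of_ne (i := 0) (j := 1) (k := 0) (h := h01),
    single_mul_single_of_ne (i := 0) (j := 1) (k := 0) (h := h01)]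
  simp

theorem stdMap_smul (c : F) (a : A) :
    stdMap (F := F) (c • a) = c • stdMap (F := F) a := by
  simp only [stdMap, Unitization.inr_smul, ← smul_single, ← Polynomial.smul_C, smul_add, smul_mul_assoc]

theorem stdMap_coeff_one (a : A) (ha : a ≠ 0) : (stdMap (F := F) a).coeff 1 ≠ 0 := by
  have h : (stdMap (F := F) a).coeff 1 = single 0 1 (Unitization.inr a) := by
    simp [stdMap, coeff_C_mul, coeff_X, mul_comm]
  rw [h]
  intro hz
  apply ha
  have := congrFun (congrFun hz 0) 1
  simp only [single, Matrix.of_apply, if_pos rfl, Matrix.zero_apply] at this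
  simpa using (Unitization.inr_injective (by simpa using this) : a = (0 : A))

end aux

/-- For every nonzero element `a` of a (possibly noncommutative, nonunital) algebra `A` over a
field `F` there is an algebra `C` and a morphism `φ : A → C[x]` with `φ a` nonconstant; concretely
the map `a ↦ E₁₁(a) + E₁₂(a)·x` into `M₂(A)[x]` is an algebra homomorphism sending every nonzero
element to a nonconstant polynomial. -/
theorem stmt_7 {F : Type u} {A : Type v} [Field F] [NonUnitalRing A] [Module F A]
    [SMulCommClass F A A] [IsScalarTower F A A] :
    (∀ a : A, a ≠ 0 → ∃ (C : Type (max u v)) (_ : Ring C) (_ : Algebra F C)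
      (φ : A →ₙₐ[F] Polynomial C), ∃ i : ℕ, 1 ≤ i ∧ (φ a).coeff i ≠ 0) ∧
    (∀ a b : A, stdMap (F := F) (a + b) = stdMap (F := F) a + stdMap (F := F) b) ∧
    (∀ a b : A, stdMap (F := F) (a * b) = stdMap (F := F) a * stdMap (F := F) b) ∧
    (∀ (c : F) (a : A), stdMap (F := F) (c • a) = c • stdMap (F := F) a) ∧
    (∀ a : A, a ≠ 0 → (stdMap (F := F) a).coeff 1 ≠ 0) := by
  refine ⟨?_, stdMap_add, stdMap_mul, stdMap_smul, stdMap_coeff_one⟩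
  intro a ha
  refine ⟨Matrix (Fin 2) (Fin 2) (Unitization F A), inferInstance, inferInstance,
    { toFun := stdMap (F := F)
      map_smul' := stdMap_smul
      map_zero' := by simp [stdMap]
      map_add' := stdMap_add
      map_mul' := stdMap_mul }, 1, le_refl 1, stdMap_coeff_one a ha⟩
end

section
/- Let A be a commutative algebra over F and a ∈ A an element with a^k = a for some k ≥ 2 such that char(F) does not divide k−1. Then for every commutative algebra C and every algebra morphism φ : A → C[x], the image φ(a) is a constant polynomial. -/
universe u v w

/-- Any polynomial over a commutative ring satisfying `p ^ k = p` with `k ≥ 2` and `k - 1`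
invertible is constant. -/
theorem aux_pow_eq_self_const {C : Type w} [CommRing C] {p : Polynomial C} {k : ℕ}
    (hk : 2 ≤ k) (hp : p ^ k = p)
    (hinv : IsUnit ((k : Polynomial C) - 1)) :
    p = Polynomial.C (p.coeff 0) := by
  set c0 : C := p.coeff 0 with hc0
  set c : Polynomial C := Polynomial.C c0 with hc
  -- c ^ k = c
  have hc0k : c0 ^ k = c0 := by
    have := congrArg (fun q : Polynomial C => q.eval 0) hp
    simpa [Polynomial.eval_pow, ← Polynomial.coeff_zero_eq_eval_zero, ← hc0] using this
  have hck : c ^ k = c := by rw [hc, ← map_pow, hc0k]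
  -- q := p - c is nilpotent
  have hqnil : IsNilpotent (p - c) := by
    rw [Polynomial.isNilpotent_iff]
    intro i
    rcases Nat.eq_zero_or_pos i with h0 | hi
    · subst h0
      simp [hc, hc0]
    · have hcoeff : (p - c).coeff i = p.coeff i := by
        simp [hc, Polynomial.coeff_C, hi.ne']
      rw [hcoeff, nilpotent_iff_mem_prime]
      intro J hJ
      haveI := hJ
      haveI : IsDomain (C ⧸ J) := Ideal.Quotient.isDomain J
      set pb := p.map (Ideal.Quotient.mk J) with hpb
      have hmap : pb ^ k = pb := by rw [hpb, ← Polynomial.map_pow, hp]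
      have hdeg : pb.natDegree = 0 := by
        have hnd := Polynomial.natDegree_pow pb k
        rw [hmap] at hnd
        rcases Nat.eq_zero_or_pos pb.natDegree with h | h
        · exact h
        · nlinarith
      have hz : pb.coeff i = 0 :=
        Polynomial.coeff_eq_zero_of_natDegree_lt (by omega)
      rw [hpb, Polynomial.coeff_map] at hz
      exact Ideal.Quotient.eq_zero_iff_mem.mp hz
  set q : Polynomial C := p - c with hq
  set s : Polynomial C := ∑ j ∈ Finset.range k, p ^ j * c ^ (k - 1 - j) with hs
  have hgs : s * q = p ^ k - c ^ k := geom_sum₂_mul p c k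
  have hq0 : q * (1 - s) = 0 := by
    have : s * q = q := by rw [hgs, hp, hck]
    rw [mul_sub, mul_one, mul_comm, this, sub_self]
  -- f := c ^ (k - 1) is idempotent
  set f : Polynomial C := c ^ (k - 1) with hf
  have hff : f * f = f := by
    rw [hf, ← pow_add]
    have : k - 1 + (k - 1) = k + (k - 2) := by omega
    rw [this, pow_add, hck, ← pow_succ']
    congr 1
    omega
  -- s - k * f is nilpotent
  have hsum : s - (k : Polynomial C) * f =
      ∑ j ∈ Finset.range k, (p ^ j - c ^ j) * c ^ (k - 1 - j) := by
    rw [Finset.sum_congr rfl (fun j _ => sub_mul (p ^ j) (c ^ j) (c ^ (k - 1 - j))),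
      Finset.sum_sub_distrib, hs]
    congr 1
    have : ∀ j ∈ Finset.range k, c ^ j * c ^ (k - 1 - j) = f := by
      intro j hj
      rw [Finset.mem_range] at hj
      rw [← pow_add, hf]
      congr 1
      omega
    rw [Finset.sum_congr rfl this, Finset.sum_const, Finset.card_range, nsmul_eq_mul]
  have hdvd : q ∣ s - (k : Polynomial C) * f := by
    rw [hsum]
    exact Finset.dvd_sum fun j _ => Dvd.dvd.mul_right (sub_dvd_pow_sub_pow p c j) _
  have hnil2 : IsNilpotent (s - (k : Polynomial C) * f) := by
    obtain ⟨r, hr⟩ := hdvd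
    rw [hr]
    exact (Commute.all q r).isNilpotent_mul_right hqnil
  -- 1 - k * f is a unit
  have hu : IsUnit (1 - (k : Polynomial C) * f) := by
    obtain ⟨w, hw⟩ := hinv
    refine IsUnit.of_mul_eq_one (1 - (k : Polynomial C) * (↑w⁻¹ : Polynomial C) * f) ?_
    have hw1 : ((k : Polynomial C) - 1) * ↑w⁻¹ = 1 := by
      rw [← hw, Units.mul_inv]
    have expand : (1 - (k : Polynomial C) * f) * (1 - (k : Polynomial C) * ↑w⁻¹ * f)
        = 1 - ((k : Polynomial C) + (k : Polynomial C) * ↑w⁻¹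
            - (k : Polynomial C) * ((k : Polynomial C) * ↑w⁻¹)) * f
          + ((k : Polynomial C) * ((k : Polynomial C) * ↑w⁻¹)) * (f * f - f) := by
      ring
    rw [expand, hff, sub_self, mul_zero, add_zero]
    have : (k : Polynomial C) + (k : Polynomial C) * ↑w⁻¹
        - (k : Polynomial C) * ((k : Polynomial C) * ↑w⁻¹) = 0 := by
      have : (k : Polynomial C) + (k : Polynomial C) * ↑w⁻¹
          - (k : Polynomial C) * ((k : Polynomial C) * ↑w⁻¹)
          = (k : Polynomial C) * (1 - ((k : Polynomial C) - 1) * ↑w⁻¹) := by ring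
      rw [this, hw1, sub_self, mul_zero]
    rw [this, zero_mul, sub_zero]
  -- hence 1 - s is a unit
  have hunit : IsUnit (1 - s) := by
    have heq : 1 - s = -(s - (k : Polynomial C) * f) + (1 - (k : Polynomial C) * f) := by ring
    rw [heq]
    exact (hnil2.neg).isUnit_add_right_of_commute hu (Commute.all _ _)
  -- conclude q = 0
  have hqz : q = 0 := by
    obtain ⟨w, hw⟩ := hunit
    have : q * ((1 - s) * ↑w⁻¹) = 0 := by
      rw [← mul_assoc, hq0, zero_mul]
    rwa [← hw, Units.mul_inv, mul_one] at this
  have : p - c = 0 := by rw [← hq, hqz]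
  rw [sub_eq_zero] at this
  exact this

/-- Let `A` be a commutative (possibly nonunital) algebra over a field `F` and `a ∈ A` with
`a^k = a` for some `k ≥ 2` with `char F ∤ (k−1)`.  Then for every commutative algebra `C` and
every algebra morphism `φ : A → C[x]`, the image `φ a` is a constant polynomial. -/
theorem stmt_8 {F : Type u} {A : Type v} [Field F] [NonUnitalCommRing A] [Module F A]
    [SMulCommClass F A A] [IsScalarTower F A A]
    (a : A) (k : ℕ) (hk : 2 ≤ k) (hchar : ((k - 1 : ℕ) : F) ≠ 0)
    (ha : (Unitization.inr a : Unitization F A) ^ k = Unitization.inr a) :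
    ∀ (C : Type w) [CommRing C] [Algebra F C]
      (φ : A →ₙₐ[F] Polynomial C), ∃ c : C, φ a = Polynomial.C c := by
  intro C _ _ φ
  set p : Polynomial C := φ a with hpdef
  have hp : p ^ k = p := by
    have := congrArg (Unitization.lift φ) ha
    simpa [map_pow] using this
  have hinv : IsUnit ((k : Polynomial C) - 1) := by
    have h1 : (algebraMap F (Polynomial C)) (((k - 1 : ℕ) : F)) = (k : Polynomial C) - 1 := by
      rw [map_natCast, Nat.cast_sub (by omega), Nat.cast_one]
    rw [← h1]
    exact (isUnit_iff_ne_zero.mpr hchar).map (algebraMap F (Polynomial C))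
  exact ⟨p.coeff 0, aux_pow_eq_self_const hk hp hinv⟩
end

section
/- Let A be a commutative unital algebra over a field F of characteristic 0, let d : A → Ω¹(A) be the universal derivation (Kähler differentials over F), and for a ∈ A define P(a) to mean: for every commutative unital F-algebra B and every unital algebra morphism φ : A → B[x], φ(a) is constant. Then ker(d) = {a ∈ A : P(a)}. -/
universe u

open Polynomial TrivSqZeroExt

section aux

variable {F A : Type u} [Field F] [CharZero F] [CommRing A] [Algebra F A]

noncomputable instance opModuleAux : Module Aᵐᵒᵖ (Ω[A⁄F]) :=
  Module.compHom _ ((RingHom.id A).fromOpposite mul_comm)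

instance : IsCentralScalar A (Ω[A⁄F]) := ⟨fun _ _ => rfl⟩

instance : SMulCommClass A Aᵐᵒᵖ (Ω[A⁄F]) :=
  ⟨fun a b m => by
    show a • (b.unop • m) = b.unop • a • m
    rw [smul_comm]⟩

instance : IsScalarTower F Aᵐᵒᵖ (Ω[A⁄F]) :=
  ⟨fun f b m => by
    show (f • b).unop • m = f • (b.unop • m)
    rw [MulOpposite.unop_smul, smul_assoc]⟩

/-- The algebra morphism `A → (A ⊕ Ω¹)[x]`, `a ↦ a + (d a) x`. -/
noncomputable def psiAux : A →ₐ[F] Polynomial (TrivSqZeroExt A (Ω[A⁄F])) where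
  toFun a := C (inl a) + C (inr (KaehlerDifferential.D F A a)) * X
  map_one' := by simp
  map_mul' a b := by
    have h : (KaehlerDifferential.D F A) (a * b) =
        a • (KaehlerDifferential.D F A b) + b • (KaehlerDifferential.D F A a) :=
      Derivation.leibniz _ a b
    have e1 : (inr (a • (KaehlerDifferential.D F A b)) : TrivSqZeroExt A (Ω[A⁄F])) =
        inl a * inr (KaehlerDifferential.D F A b) := (inl_mul_inr a _).symm
    have e2 : (inr (b • (KaehlerDifferential.D F A a)) : TrivSqZeroExt A (Ω[A⁄F])) =
        inl b * inr (KaehlerDifferential.D F A a) := (inl_mul_inr b _).symm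
    have e3 : (inl (a * b) : TrivSqZeroExt A (Ω[A⁄F])) = inl a * inl b :=
      (inl_mul_inl (M := Ω[A⁄F]) a b).symm
    have hz : (C (inr (KaehlerDifferential.D F A b)) * C (inr (KaehlerDifferential.D F A a)) :
        Polynomial (TrivSqZeroExt A (Ω[A⁄F]))) = 0 := by
      rw [← C_mul, inr_mul_inr]; exact map_zero C
    simp only [h, inr_add, map_add, e1, e2, e3, map_mul]
    ring_nf
    rw [hz]
    ring
  map_zero' := by simp
  map_add' a b := by
    simp only [map_add, inl_add, inr_add]
    push_cast [map_add]
    ring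
  commutes' r := by
    have : (KaehlerDifferential.D F A) (algebraMap F A r) = 0 := by
      simpa using (KaehlerDifferential.D F A).map_algebraMap r
    simp only [this, inr_zero, map_zero, zero_mul, add_zero]
    rw [Polynomial.algebraMap_apply, algebraMap_eq_inl']

end aux

/-- Over a field of characteristic zero, the kernel of the universal derivation
`d : A → Ω¹_{A/F}` consists exactly of the elements `a ∈ A` such that for every commutative
unital `F`-algebra `B` and every unital algebra morphism `φ : A → B[x]`, `φ a` is constant. -/
theorem stmt_10 {F A : Type u} [Field F] [CharZero F] [CommRing A] [Algebra F A] (a : A) :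
    (KaehlerDifferential.D F A) a = 0 ↔
      ∀ (B : Type u) [CommRing B] [Algebra F B]
        (φ : A →ₐ[F] Polynomial B), ∃ b : B, φ a = Polynomial.C b := by
  constructor
  · intro ha B _ _ φ
    -- derivative ∘ φ is a derivation
    letI : Algebra A (Polynomial B) := φ.toRingHom.toAlgebra
    have hsmul : ∀ (c : A) (p : Polynomial B), c • p = φ c * p := fun c p => by
      rw [Algebra.smul_def]; rfl
    let δ : Derivation F A (Polynomial B) :=
      { toFun := fun c => derivative (φ c)
        map_add' := fun c d => by simp
        map_smul' := fun r c => by simp [Algebra.smul_def, map_mul]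
        map_one_eq_zero' := by simp
        leibniz' := fun c d => by
          simp [map_mul, derivative_mul, hsmul, mul_comm, add_comm] }
    have hda : derivative (φ a) = 0 := by
      have := δ.liftKaehlerDifferential_comp_D a
      rw [ha, map_zero] at this
      exact this.symm
    -- char zero: derivative zero implies constant
    refine ⟨(φ a).coeff 0, ?_⟩
    ext n
    cases n with
    | zero => simp
    | succ n =>
      have h1 : (φ a).coeff (n + 1) * (n + 1 : B) = 0 := by
        have := congrArg (fun p => Polynomial.coeff p n) hda
        simpa [Polynomial.coeff_derivative] using this
      have hn1 : ((n : B) + 1) = algebraMap F B ((n : F) + 1) := by push_cast; simp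
      have hunit : IsUnit ((n : B) + 1) := by
        rw [hn1]
        exact (IsUnit.map (algebraMap F B) (isUnit_iff_ne_zero.2 (by exact_mod_cast Nat.cast_add_one_ne_zero (R:=F) n)))
      have : (φ a).coeff (n + 1) = 0 := by
        have := hunit.mul_left_eq_zero.1 (by rw [mul_comm] at h1 ⊢; push_cast at h1 ⊢; exact h1)
        exact this
      simp [this]
  · intro h
    obtain ⟨b, hb⟩ := h _ (psiAux)
    have h1 := congrArg (fun p => Polynomial.coeff p 1) hb
    simp only [psiAux, AlgHom.coe_mk, RingHom.coe_mk, MonoidHom.coe_mk, OneHom.coe_mk,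
      Polynomial.coeff_add, Polynomial.coeff_C, Polynomial.coeff_C_mul, Polynomial.coeff_X_one,
      mul_one] at h1
    have : (inr (KaehlerDifferential.D F A a) : TrivSqZeroExt A (Ω[A⁄F])) = 0 := by
      simpa using h1
    exact (TrivSqZeroExt.inr_injective (M := Ω[A⁄F])).eq_iff.1 (show inr (KaehlerDifferential.D F A a) = (inr 0 : TrivSqZeroExt A (Ω[A⁄F])) from this.trans (by ext <;> simp)) |>.symm ▸ by
      simpa using congrArg TrivSqZeroExt.snd this
end

section
/- Let A be a unital algebra over F. For any subset S ⊆ A, define P_S(A) = {a ∈ A : for every algebra C of class S and morphism φ : A → C[x], φ(a) is constant}. Then the set P^cu(A) of elements a such that every UNITAL morphism from A into B[x] (B commutative unital) sends a to a constant equals the set P^c(A) of elements a such that every (not necessarily unital) morphism from A into C[x] (C commutative, not necessarily unital) sends a to a constant. -/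
universe u

open Polynomial

/-- An idempotent polynomial over a commutative ring is constant. -/
lemma idem_poly_const {R : Type*} [CommRing R] {p : R[X]} (h : p * p = p) :
    p = Polynomial.C (p.coeff 0) := by
  have ha0 : p.coeff 0 * p.coeff 0 = p.coeff 0 := by
    have := congrArg (fun q => Polynomial.coeff q 0) h
    simpa [Polynomial.mul_coeff_zero] using this
  have key : ∀ n, 0 < n → p.coeff n = 0 := by
    intro n hn
    induction n using Nat.strong_induction_on with
    | _ n ih =>
      have h1 : p.coeff n = ∑ i ∈ Finset.range (n + 1), p.coeff i * p.coeff (n - i) := by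
        conv_lhs => rw [← h]
        rw [Polynomial.coeff_mul, Finset.Nat.sum_antidiagonal_eq_sum_range_succ_mk]
      rw [Finset.sum_range_succ, Nat.sub_self] at h1
      have h2 : ∑ i ∈ Finset.range n, p.coeff i * p.coeff (n - i)
          = p.coeff 0 * p.coeff n := by
        rw [Finset.sum_eq_single 0]
        · simp
        · intro b hb hb0
          rw [ih b (Finset.mem_range.mp hb) (Nat.pos_of_ne_zero hb0)]
          ring
        · intro h0
          exact absurd (Finset.mem_range.mpr hn) h0
      rw [h2] at h1
      linear_combination (1 - 2 * p.coeff 0) * h1 - 4 * p.coeff n * ha0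
  ext n
  rcases Nat.eq_zero_or_pos n with rfl | hn
  · simp
  · rw [key n hn, Polynomial.coeff_C, if_neg hn.ne']

/-- For a unital algebra `A` over a field `F`, an element `a` is sent to a constant polynomial by
every **unital** morphism `A → B[x]` (`B` commutative unital) if and only if it is sent to a
constant polynomial by every (not necessarily unital) morphism `A → C[x]` (`C` commutative). -/
theorem stmt_12 {F A : Type u} [Field F] [Ring A] [Algebra F A] :
    {a : A | ∀ (B : Type u) [CommRing B] [Algebra F B]
        (φ : A →ₐ[F] Polynomial B), ∃ b : B, φ a = Polynomial.C b} =
      {a : A | ∀ (C : Type u) [CommRing C] [Algebra F C]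
        (φ : A →ₙₐ[F] Polynomial C), ∃ c : C, φ a = Polynomial.C c} := by
  ext a
  simp only [Set.mem_setOf_eq]
  constructor
  · intro H Cc _ _ φ
    -- the idempotent
    have hmul : φ 1 * φ 1 = φ 1 := by rw [← map_mul, one_mul]
    set e0 : Cc := (φ 1).coeff 0 with he0
    have hφ1 : φ 1 = Polynomial.C e0 := idem_poly_const hmul
    have he0idem : e0 * e0 = e0 := by
      have := congrArg (fun q => Polynomial.coeff q 0) hmul
      simpa [Polynomial.mul_coeff_zero] using this
    -- the quotient ring
    set I : Ideal Cc := Ideal.span {(1 : Cc) - e0} with hI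
    let B := Cc ⧸ I
    let π : Cc →ₐ[F] B := Ideal.Quotient.mkₐ F I
    -- the induced unital morphism
    have hπe0 : π e0 = 1 := by
      have : ((1 : Cc) - e0) ∈ I := Ideal.subset_span rfl
      have h0 : π ((1 : Cc) - e0) = 0 := by
        exact (Ideal.Quotient.eq_zero_iff_mem).mpr this
      have := h0
      rw [map_sub, map_one, sub_eq_zero] at this
      exact this.symm
    let ψmap : Polynomial Cc →ₐ[F] Polynomial B := Polynomial.mapAlgHom π
    let ψ' : A →ₙₐ[F] Polynomial B := ψmap.toNonUnitalAlgHom.comp φ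
    have hψ'1 : ψ' 1 = 1 := by
      show ψmap (φ 1) = 1
      rw [hφ1]
      simp [ψmap, Polynomial.mapAlgHom, hπe0]
    let ψ : A →ₐ[F] Polynomial B :=
      { toFun := ψ'
        map_one' := hψ'1
        map_mul' := map_mul ψ'
        map_zero' := map_zero ψ'
        map_add' := map_add ψ'
        commutes' := by
          intro f
          show ψ' ((algebraMap F A) f) = _
          have : (algebraMap F A) f = f • (1 : A) := by
            rw [Algebra.smul_def, mul_one]
          rw [this, map_smul, hψ'1, Algebra.algebraMap_eq_smul_one] }
    obtain ⟨b, hb⟩ := H B ψ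
    -- φ a has coefficients fixed by e0
    have hfix : ∀ n, e0 * (φ a).coeff n = (φ a).coeff n := by
      intro n
      have : φ a * φ 1 = φ a := by rw [← map_mul, mul_one]
      conv_rhs => rw [← this]
      rw [hφ1, Polynomial.coeff_mul_C, mul_comm]
    -- π is injective on elements fixed by e0
    have hinj : ∀ c : Cc, e0 * c = c → π c = 0 → c = 0 := by
      intro c hc hc0
      have hmem : c ∈ I := by
        rw [← Ideal.Quotient.eq_zero_iff_mem]
        exact hc0
      rw [hI, Ideal.mem_span_singleton] at hmem
      obtain ⟨d, hd⟩ := hmem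
      have : e0 * c = 0 := by
        rw [hd]
        linear_combination -d * he0idem
      rw [hc] at this
      exact this
    -- conclude φ a is constant
    refine ⟨(φ a).coeff 0, ?_⟩
    ext n
    rcases Nat.eq_zero_or_pos n with rfl | hn
    · simp
    · rw [Polynomial.coeff_C, if_neg hn.ne']
      apply hinj _ (hfix n)
      have : (ψ a).coeff n = 0 := by
        rw [hb, Polynomial.coeff_C, if_neg hn.ne']
      have hcoeff : (ψ a).coeff n = π ((φ a).coeff n) := by
        show (ψmap (φ a)).coeff n = π ((φ a).coeff n)
        simp [ψmap, Polynomial.coeff_map]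
      rw [hcoeff] at this
      exact this
  · intro H B _ _ φ
    exact H B φ.toNonUnitalAlgHom
end

section
/- Let α, β : A → B be algebra morphisms. Then the morphisms A → M₂(B) given by a ↦ diag(α(a), β(a)) and a ↦ diag(β(a), α(a)) are elementary homotopic, i.e., there is a morphism H : A → M₂(B)[x] with ev₀∘H = diag(α,β) and ev₁∘H = diag(β,α). -/
open Matrix

namespace Stmt16Aux

open Polynomial

variable {T : Type*} [Ring T]

/-- The transfer map `M₂(T[X]) → (M₂ T)[X]`. -/
noncomputable def phi (m : Matrix (Fin 2) (Fin 2) T[X]) :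
    Polynomial (Matrix (Fin 2) (Fin 2) T) :=
  ⟨⟨Finsupp.onFinset
    ((Finset.univ : Finset (Fin 2 × Fin 2)).biUnion fun p => (m p.1 p.2).support)
    (fun k => Matrix.of fun i j => (m i j).coeff k)
    (by
      intro k hk
      have : ∃ i j, (m i j).coeff k ≠ 0 := by
        by_contra h
        push_neg at h
        apply hk
        ext i j
        simp [h i j]
      obtain ⟨i, j, h⟩ := this
      exact Finset.mem_biUnion.2 ⟨(i, j), Finset.mem_univ _, Polynomial.mem_support_iff.2 h⟩)⟩⟩

theorem coeff_phi (m : Matrix (Fin 2) (Fin 2) T[X]) (k : ℕ) :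
    (phi m).coeff k = Matrix.of fun i j => (m i j).coeff k := rfl

theorem phi_add (m m' : Matrix (Fin 2) (Fin 2) T[X]) :
    phi (m + m') = phi m + phi m' := by
  apply Polynomial.ext
  intro k
  refine Matrix.ext fun i j => ?_
  simp [coeff_phi, Polynomial.coeff_add]

theorem phi_zero : phi (0 : Matrix (Fin 2) (Fin 2) T[X]) = 0 := by
  apply Polynomial.ext
  intro k
  refine Matrix.ext fun i j => ?_
  simp [coeff_phi]

theorem phi_smul {S : Type*} [Monoid S] [DistribMulAction S T]
    (c : S) (m : Matrix (Fin 2) (Fin 2) T[X]) :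
    phi (c • m) = c • phi m := by
  apply Polynomial.ext
  intro k
  refine Matrix.ext fun i j => ?_
  simp [coeff_phi, Polynomial.coeff_smul]

theorem phi_mul (m m' : Matrix (Fin 2) (Fin 2) T[X]) :
    phi (m * m') = phi m * phi m' := by
  apply Polynomial.ext
  intro k
  refine Matrix.ext fun i j => ?_
  rw [Polynomial.coeff_mul]
  rw [Matrix.sum_apply]
  have rhs : ∀ x ∈ Finset.HasAntidiagonal.antidiagonal k,
      ((phi m).coeff x.1 * (phi m').coeff x.2) i j
        = ∑ c : Fin 2, (m i c).coeff x.1 * (m' c j).coeff x.2 := by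
    intro x _
    rw [Matrix.mul_apply]
    simp [coeff_phi]
  rw [Finset.sum_congr rfl rhs]
  rw [coeff_phi, Matrix.of_apply, Matrix.mul_apply, Polynomial.finset_sum_coeff]
  rw [Finset.sum_congr rfl fun c _ => Polynomial.coeff_mul (m i c) (m' c j) k]
  exact Finset.sum_comm.symm

theorem phi_eval_zero (m : Matrix (Fin 2) (Fin 2) T[X]) :
    (phi m).eval 0 = Matrix.of fun i j => (m i j).eval 0 := by
  rw [← Polynomial.coeff_zero_eq_eval_zero, coeff_phi]
  refine Matrix.ext fun i j => ?_
  simp [← Polynomial.coeff_zero_eq_eval_zero]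

theorem natDegree_entry_le (m : Matrix (Fin 2) (Fin 2) T[X]) (i j : Fin 2) :
    (m i j).natDegree ≤ (phi m).natDegree := by
  apply Polynomial.natDegree_le_iff_coeff_eq_zero.2
  intro N hN
  have h0 : (phi m).coeff N = 0 := Polynomial.coeff_eq_zero_of_natDegree_lt hN
  have : (phi m).coeff N i j = (0 : Matrix (Fin 2) (Fin 2) T) i j := by rw [h0]
  simpa [coeff_phi] using this

theorem phi_eval_one (m : Matrix (Fin 2) (Fin 2) T[X]) :
    (phi m).eval 1 = Matrix.of fun i j => (m i j).eval 1 := by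
  set d := (phi m).natDegree with hd
  rw [Polynomial.eval_eq_sum_range' (Nat.lt_succ_self d) 1]
  refine Matrix.ext fun i j => ?_
  rw [Matrix.sum_apply, Matrix.of_apply, Polynomial.eval_eq_sum_range'
    (Nat.lt_succ_of_le (natDegree_entry_le m i j)) 1]
  apply Finset.sum_congr rfl
  intro k _
  simp [coeff_phi]

theorem eval_mul_comm (t : T) (ht : ∀ k : T, Commute k t) (p q : T[X]) :
    (p * q).eval t = p.eval t * q.eval t :=
  Polynomial.eval₂_mul_noncomm _ _ fun k => ht _

/-- Entrywise evaluation of a matrix of polynomials. -/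
noncomputable def Em (t : T) (m : Matrix (Fin 2) (Fin 2) T[X]) :
    Matrix (Fin 2) (Fin 2) T :=
  Matrix.of fun i j => (m i j).eval t

theorem Em_mul (t : T) (ht : ∀ k : T, Commute k t)
    (P Q : Matrix (Fin 2) (Fin 2) T[X]) :
    Em t (P * Q) = Em t P * Em t Q := by
  ext i j
  simp [Em, Matrix.mul_apply, Fin.sum_univ_two, eval_mul_comm t ht]

section Homotopy

variable {F A B : Type*} [Field F]
    [NonUnitalRing A] [Module F A] [SMulCommClass F A A] [IsScalarTower F A A]
    [NonUnitalRing B] [Module F B] [SMulCommClass F B B] [IsScalarTower F B B]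
    (α β : A →ₙₐ[F] B)

/-- The invertible matrix `R(x)`. -/
noncomputable def Rm : Matrix (Fin 2) (Fin 2) (Polynomial (Unitization F B)) :=
  !![1 - X * X, X * X * X - (X + X); X, 1 - X * X]

/-- The inverse of `R(x)`. -/
noncomputable def Ri : Matrix (Fin 2) (Fin 2) (Polynomial (Unitization F B)) :=
  !![1 - X * X, (X + X) - X * X * X; -X, 1 - X * X]

theorem Rm_mul_Ri : (Rm * Ri : Matrix (Fin 2) (Fin 2) (Polynomial (Unitization F B))) = 1 := by
  have h : (!![1 - X * X, X * X * X - (X + X); X, 1 - X * X] *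
      !![1 - X * X, (X + X) - X * X * X; -X, 1 - X * X] :
        Matrix (Fin 2) (Fin 2) (Polynomial ℤ)) = 1 := by
    refine Matrix.ext fun i j => ?_
    fin_cases i <;> fin_cases j <;>
      simp [Matrix.mul_apply, Fin.sum_univ_two, Matrix.one_apply] <;> ring
  have hm : (Rm : Matrix (Fin 2) (Fin 2) (Polynomial (Unitization F B))) =
      (Polynomial.mapRingHom (Int.castRingHom (Unitization F B))).mapMatrix
        !![1 - X * X, X * X * X - (X + X); X, 1 - X * X] := by
    refine Matrix.ext fun i j => ?_
    fin_cases i <;> fin_cases j <;>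
      simp [Rm, RingHom.mapMatrix_apply, Matrix.map_apply, Polynomial.map_sub,
        Polynomial.map_mul, Polynomial.map_add, Polynomial.map_one, Polynomial.map_X]
  have hi : (Ri : Matrix (Fin 2) (Fin 2) (Polynomial (Unitization F B))) =
      (Polynomial.mapRingHom (Int.castRingHom (Unitization F B))).mapMatrix
        !![1 - X * X, (X + X) - X * X * X; -X, 1 - X * X] := by
    refine Matrix.ext fun i j => ?_
    fin_cases i <;> fin_cases j <;>
      simp [Ri, RingHom.mapMatrix_apply, Matrix.map_apply, Polynomial.map_sub,
        Polynomial.map_mul, Polynomial.map_add, Polynomial.map_one, Polynomial.map_X,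
        Polynomial.map_neg]
  rw [hm, hi, ← _root_.map_mul, h, _root_.map_one]

/-- The diagonal matrix `diag(α a, β a)` with polynomial entries. -/
noncomputable def Dm (a : A) : Matrix (Fin 2) (Fin 2) (Polynomial (Unitization F B)) :=
  !![C (Unitization.inr (α a)), 0; 0, C (Unitization.inr (β a))]

/-- The conjugated diagonal morphism. -/
noncomputable def G (a : A) : Matrix (Fin 2) (Fin 2) (Polynomial (Unitization F B)) :=
  Ri * Dm α β a * Rm

theorem Dm_mul (a b : A) : Dm α β (a * b) = Dm α β a * Dm α β b := by
  refine Matrix.ext fun i j => ?_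
  fin_cases i <;> fin_cases j <;>
    simp [Dm, Matrix.mul_apply, Fin.sum_univ_two, _root_.map_mul, Unitization.inr_mul]

theorem Dm_add (a b : A) : Dm α β (a + b) = Dm α β a + Dm α β b := by
  refine Matrix.ext fun i j => ?_
  fin_cases i <;> fin_cases j <;>
    simp [Dm, _root_.map_add, Unitization.inr_add]

theorem Dm_zero : Dm α β 0 = 0 := by
  refine Matrix.ext fun i j => ?_
  fin_cases i <;> fin_cases j <;> simp [Dm]

theorem Dm_smul (c : F) (a : A) : Dm α β (c • a) = c • Dm α β a := by
  refine Matrix.ext fun i j => ?_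
  fin_cases i <;> fin_cases j <;>
    simp [Dm, _root_.map_smul, Unitization.inr_smul, Polynomial.smul_C]

theorem G_mul (a b : A) : G α β (a * b) = G α β a * G α β b := by
  simp only [G, Dm_mul]
  have : Dm α β a * Rm * (Ri * (Dm α β b * Rm)) = Dm α β a * (Dm α β b * Rm) := by
    rw [Matrix.mul_assoc, ← Matrix.mul_assoc Rm, Rm_mul_Ri, Matrix.one_mul]
  simp only [Matrix.mul_assoc] at this ⊢
  rw [this]

theorem G_add (a b : A) : G α β (a + b) = G α β a + G α β b := by
  simp only [G, Dm_add, Matrix.mul_add, Matrix.add_mul]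

theorem G_zero : G α β 0 = 0 := by
  simp only [G, Dm_zero, Matrix.mul_zero, Matrix.zero_mul]

theorem G_smul (c : F) (a : A) : G α β (c • a) = c • G α β a := by
  simp only [G, Dm_smul, Matrix.mul_smul, Matrix.smul_mul]

/-- The homotopy, as a non-unital algebra morphism. -/
noncomputable def Hhom : A →ₙₐ[F] Polynomial (Matrix (Fin 2) (Fin 2) (Unitization F B)) where
  toFun a := phi (G α β a)
  map_zero' := by show phi (G α β 0) = 0; rw [G_zero, phi_zero]
  map_add' a b := by
    show phi (G α β (a + b)) = phi (G α β a) + phi (G α β b)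
    rw [G_add, phi_add]
  map_smul' c a := by
    show phi (G α β (c • a)) = c • phi (G α β a)
    rw [G_smul, phi_smul]
  map_mul' a b := by
    show phi (G α β (a * b)) = phi (G α β a) * phi (G α β b)
    rw [G_mul, phi_mul]

theorem Hhom_apply (a : A) : Hhom α β a = phi (G α β a) := rfl

end Homotopy

end Stmt16Aux

/-- For morphisms `α, β : A → B` of (possibly nonunital, noncommutative) algebras over a field
`F`, the morphisms `a ↦ diag(α a, β a)` and `a ↦ diag(β a, α a)` into `M₂(B)` are elementary
homotopic: there is a morphism `H : A → M₂(B)[x]` (matrices taken over the unitization of `B`,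
with all coefficient entries in `B`) with `ev₀ ∘ H = diag(α, β)` and `ev₁ ∘ H = diag(β, α)`. -/
theorem stmt_16 {F A B : Type*} [Field F]
    [NonUnitalRing A] [Module F A] [SMulCommClass F A A] [IsScalarTower F A A]
    [NonUnitalRing B] [Module F B] [SMulCommClass F B B] [IsScalarTower F B B]
    (α β : A →ₙₐ[F] B) :
    ∃ H : A →ₙₐ[F] Polynomial (Matrix (Fin 2) (Fin 2) (Unitization F B)),
      (∀ (a : A) (n : ℕ) (i j : Fin 2), ∃ b : B,
        ((H a).coeff n) i j = Unitization.inr b) ∧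
      (∀ a : A, (H a).eval 0 =
        !![(Unitization.inr (α a) : Unitization F B), 0; 0, Unitization.inr (β a)]) ∧
      (∀ a : A, (H a).eval 1 =
        !![(Unitization.inr (β a) : Unitization F B), 0; 0, Unitization.inr (α a)]) := by
  classical
  open Polynomial Stmt16Aux in
  refine ⟨Hhom α β, ?_, ?_, ?_⟩
  · -- all coefficients have vanishing scalar part
    intro a n i j
    -- the scalar-part projection, applied entrywise to matrices of polynomials
    set fstR : Unitization F B →+* F := (Unitization.fstHom F B).toRingHom with hfstR
    set Ψ : Matrix (Fin 2) (Fin 2) (Polynomial (Unitization F B)) →+*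
        Matrix (Fin 2) (Fin 2) (Polynomial F) :=
      (Polynomial.mapRingHom fstR).mapMatrix with hΨ
    have hDm : Ψ (Dm α β a) = 0 := by
      refine Matrix.ext fun i' j' => ?_
      fin_cases i' <;> fin_cases j' <;>
        simp [hΨ, Dm, Matrix.map_apply, Polynomial.map_C, hfstR, Unitization.fst_inr]
    have hG : Ψ (G α β a) = 0 := by
      rw [G, _root_.map_mul, _root_.map_mul, hDm, Matrix.mul_zero, Matrix.zero_mul]
    have hfst : (((G α β a) i j).coeff n).fst = 0 := by
      have h1 : ((G α β a) i j).map fstR = 0 := by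
        have := congrArg (fun m => m i j) hG
        simpa [hΨ, RingHom.mapMatrix_apply, Matrix.map_apply] using this
      have := congrArg (fun p => p.coeff n) h1
      simpa [Polynomial.coeff_map, hfstR] using this
    refine ⟨(((G α β a) i j).coeff n).snd, ?_⟩
    have : ((Hhom α β a).coeff n) i j = ((G α β a) i j).coeff n := by
      rw [Hhom_apply, coeff_phi]; rfl
    rw [this]
    exact (Unitization.ext (by simp [hfst]) (by simp)).symm
  · -- evaluation at 0
    intro a
    have e0 : ∀ p q : Polynomial (Unitization F B),
        (p * q).eval 0 = p.eval 0 * q.eval 0 :=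
      eval_mul_comm 0 fun k => Commute.zero_right k
    have key : (Hhom α β a).eval 0 = Em 0 (G α β a) := by
      rw [Hhom_apply, phi_eval_zero]; rfl
    rw [key, G, Em_mul 0 (fun k => Commute.zero_right k),
      Em_mul 0 (fun k => Commute.zero_right k)]
    have hRi : Em 0 (Ri : Matrix (Fin 2) (Fin 2) (Polynomial (Unitization F B))) = 1 := by
      refine Matrix.ext fun i j => ?_
      fin_cases i <;> fin_cases j <;>
        simp [Em, Ri, e0, Matrix.one_apply]
    have hRm : Em 0 (Rm : Matrix (Fin 2) (Fin 2) (Polynomial (Unitization F B))) = 1 := by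
      refine Matrix.ext fun i j => ?_
      fin_cases i <;> fin_cases j <;>
        simp [Em, Rm, e0, Matrix.one_apply]
    have hDm : Em 0 (Dm α β a) =
        !![(Unitization.inr (α a) : Unitization F B), 0; 0, Unitization.inr (β a)] := by
      refine Matrix.ext fun i j => ?_
      fin_cases i <;> fin_cases j <;> simp [Em, Dm]
    rw [hRi, hRm, hDm, Matrix.one_mul, Matrix.mul_one]
  · -- evaluation at 1
    intro a
    have e1 : ∀ p q : Polynomial (Unitization F B),
        (p * q).eval 1 = p.eval 1 * q.eval 1 :=
      eval_mul_comm 1 fun k => Commute.one_right k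
    have key : (Hhom α β a).eval 1 = Em 1 (G α β a) := by
      rw [Hhom_apply, phi_eval_one]; rfl
    rw [key, G, Em_mul 1 (fun k => Commute.one_right k),
      Em_mul 1 (fun k => Commute.one_right k)]
    have hRi : Em 1 (Ri : Matrix (Fin 2) (Fin 2) (Polynomial (Unitization F B))) =
        !![0, 1; -1, 0] := by
      refine Matrix.ext fun i j => ?_
      fin_cases i <;> fin_cases j <;> simp [Em, Ri, e1] <;> abel
    have hRm : Em 1 (Rm : Matrix (Fin 2) (Fin 2) (Polynomial (Unitization F B))) =
        !![0, -1; 1, 0] := by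
      refine Matrix.ext fun i j => ?_
      fin_cases i <;> fin_cases j <;> simp [Em, Rm, e1] <;> abel
    have hDm : Em 1 (Dm α β a) =
        !![(Unitization.inr (α a) : Unitization F B), 0; 0, Unitization.inr (β a)] := by
      refine Matrix.ext fun i j => ?_
      fin_cases i <;> fin_cases j <;> simp [Em, Dm]
    rw [hRi, hRm, hDm]
    refine Matrix.ext fun i j => ?_
    fin_cases i <;> fin_cases j <;>
      simp [Matrix.mul_apply, Fin.sum_univ_two]
end

section
/- Let F be an algebraically closed field and let G : A ↦ G(A) be an assignment of a subalgebra G(A) ⊆ A to each finitely generated commutative unital reduced F-algebra A, such that every algebra morphism f : A → B maps G(A) into G(B) and 1_A ∈ G(A). Then for finitely generated commutative unital reduced A and B, G(A ⊗ B) = G(A) ⊗ G(B) (as subspaces of A ⊗ B). -/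
open TensorProduct

set_option maxHeartbeats 1000000
set_option synthInstance.maxHeartbeats 400000

universe u

section Aux

variable {F : Type u} [Field F] [IsAlgClosed F]

/-- Nullstellensatz-type lemma: in a finitely generated reduced algebra over an
algebraically closed field, an element killed by all `F`-points is zero. -/
theorem aux_eq_zero_of_points {A : Type u} [CommRing A] [Algebra F A]
    [hA : Algebra.FiniteType F A] [IsReduced A] {a : A}
    (h : ∀ φ : A →ₐ[F] F, φ a = 0) : a = 0 := by
  haveI : IsJacobsonRing A := isJacobsonRing_of_finiteType (A := F)
  have hjac : a ∈ (⊥ : Ideal A).jacobson := by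
    rw [Ideal.jacobson, Ideal.mem_sInf]
    rintro m ⟨-, hm⟩
    haveI : m.IsMaximal := hm
    letI : Field (A ⧸ m) := Ideal.Quotient.field m
    haveI : Algebra.FiniteType F (A ⧸ m) :=
      Algebra.FiniteType.of_surjective (Ideal.Quotient.mkₐ F m)
        Ideal.Quotient.mk_surjective
    haveI : Module.Finite F (A ⧸ m) := finite_of_finite_type_of_isJacobsonRing F (A ⧸ m)
    haveI : Algebra.IsIntegral F (A ⧸ m) := Algebra.IsIntegral.of_finite F (A ⧸ m)
    have hsurj : Function.Surjective (algebraMap F (A ⧸ m)) :=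
      IsAlgClosed.algebraMap_bijective_of_isIntegral.2
    have hinj : Function.Injective (algebraMap F (A ⧸ m)) :=
      (algebraMap F (A ⧸ m)).injective
    let e : F ≃ₐ[F] (A ⧸ m) := AlgEquiv.ofBijective (Algebra.ofId F (A ⧸ m)) ⟨hinj, hsurj⟩
    have h0 := h (e.symm.toAlgHom.comp (Ideal.Quotient.mkₐ F m))
    simp only [AlgHom.comp_apply, AlgEquiv.toAlgHom_eq_coe, AlgHom.coe_coe] at h0
    have : (Ideal.Quotient.mkₐ F m) a = 0 := by
      have := congrArg e h0
      simpa using this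
    simpa [Ideal.Quotient.eq_zero_iff_mem] using this
  have hrad : (⊥ : Ideal A).jacobson = ⊥ := by
    rw [← Ideal.radical_eq_jacobson]
    have : nilradical A = 0 := nilradical_eq_zero A
    simpa [nilradical, Ideal.zero_eq_bot] using this
  rw [hrad] at hjac
  simpa using hjac

/-- Coordinate computation for the basis decomposition of a tensor. -/
theorem aux_coord {A M : Type u} [CommRing A] [Algebra F A]
    [AddCommGroup M] [Module F M] {ι : Type u} [DecidableEq ι] (b : Module.Basis ι F M)
    (φ : A →ₐ[F] F) (x : A ⊗[F] M) (i : ι) :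
    φ ((TensorProduct.equivFinsuppOfBasisRight b x) i) =
      b.repr ((TensorProduct.lid F M) (LinearMap.rTensor M φ.toLinearMap x)) i := by
  induction x using TensorProduct.induction_on with
  | zero => simp only [map_zero, Finsupp.coe_zero, Pi.zero_apply, map_zero]
  | tmul a m =>
      simp only [TensorProduct.equivFinsuppOfBasisRight_apply_tmul_apply,
        LinearMap.rTensor_tmul, AlgHom.toLinearMap_apply, TensorProduct.lid_tmul,
        map_smul, Finsupp.smul_apply]
      simp [smul_eq_mul, mul_comm]
  | add x y hx hy =>
      simp only [map_add, Finsupp.add_apply, Finsupp.coe_add, Pi.add_apply]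
      rw [hx, hy]

/-- If every `F`-point sends `c` into `W`, then `c ∈ A ⊗ W`. -/
theorem aux_mem_range {A : Type u} [CommRing A] [Algebra F A]
    [Algebra.FiniteType F A] [IsReduced A]
    {M : Type u} [AddCommGroup M] [Module F M] (W : Submodule F M) (c : A ⊗[F] M)
    (hc : ∀ φ : A →ₐ[F] F,
      (TensorProduct.lid F M) (LinearMap.rTensor M φ.toLinearMap c) ∈ W) :
    c ∈ LinearMap.range (LinearMap.lTensor A W.subtype) := by
  classical
  rw [← lTensor_mkQ, LinearMap.mem_ker]
  set d := LinearMap.lTensor A W.mkQ c with hd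
  have key : ∀ φ : A →ₐ[F] F,
      (TensorProduct.lid F (M ⧸ W)) (LinearMap.rTensor (M ⧸ W) φ.toLinearMap d) = 0 := by
    intro φ
    have h1 : LinearMap.rTensor (M ⧸ W) φ.toLinearMap d
        = LinearMap.lTensor F W.mkQ (LinearMap.rTensor M φ.toLinearMap c) := by
      rw [hd, ← LinearMap.comp_apply, ← LinearMap.comp_apply,
        LinearMap.rTensor_comp_lTensor, LinearMap.lTensor_comp_rTensor]
    have h2 : ∀ y : F ⊗[F] M, (TensorProduct.lid F (M ⧸ W)) (LinearMap.lTensor F W.mkQ y)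
        = W.mkQ (TensorProduct.lid F M y) := by
      intro y
      induction y using TensorProduct.induction_on with
      | zero => simp
      | tmul r m => simp
      | add u v hu hv => simp [map_add, hu, hv]
    rw [h1, h2, Submodule.mkQ_apply, Submodule.Quotient.mk_eq_zero]
    exact hc φ
  let b : Module.Basis _ F (M ⧸ W) := Module.Basis.ofVectorSpace F (M ⧸ W)
  have hz : (TensorProduct.equivFinsuppOfBasisRight b) d = 0 := by
    ext i
    refine aux_eq_zero_of_points (F := F) (fun φ => ?_)
    rw [aux_coord b φ d i, key φ]
    simp
  rwa [LinearEquiv.map_eq_zero_iff] at hz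

/-- Intersection of the two "partial" tensor subspaces. -/
theorem aux_inter {A M : Type u} [AddCommGroup A] [Module F A] [AddCommGroup M] [Module F M]
    (V : Submodule F A) (W : Submodule F M) {c : A ⊗[F] M}
    (h1 : c ∈ LinearMap.range (LinearMap.lTensor A W.subtype))
    (h2 : c ∈ LinearMap.range (LinearMap.rTensor M V.subtype)) :
    c ∈ LinearMap.range (TensorProduct.map V.subtype W.subtype) := by
  obtain ⟨d, hdc⟩ := h1
  have hker : LinearMap.rTensor M V.mkQ c = 0 := by
    rw [← LinearMap.mem_ker, rTensor_mkQ]; exact h2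
  have h3 : LinearMap.lTensor (A ⧸ V) W.subtype (LinearMap.rTensor W V.mkQ d) = 0 := by
    rw [← LinearMap.comp_apply, LinearMap.lTensor_comp_rTensor,
      ← LinearMap.rTensor_comp_lTensor, LinearMap.comp_apply, hdc, hker]
  have hinj : Function.Injective (LinearMap.lTensor (A ⧸ V) W.subtype) :=
    Module.Flat.lTensor_preserves_injective_linearMap _ W.injective_subtype
  have h4 : LinearMap.rTensor W V.mkQ d = 0 := hinj (by simpa using h3)
  have h5 : d ∈ LinearMap.range (LinearMap.rTensor W V.subtype) := by
    rw [← rTensor_mkQ, LinearMap.mem_ker]; exact h4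
  obtain ⟨e, he⟩ := h5
  exact ⟨e, by rw [← hdc, ← he, ← LinearMap.comp_apply, LinearMap.lTensor_comp_rTensor]⟩

/-- The `F`-point evaluation map `A ⊗ B → B`, as an algebra morphism. -/
noncomputable def auxPtB {A B : Type u} [CommRing A] [Algebra F A] [CommRing B] [Algebra F B]
    (φ : A →ₐ[F] F) : A ⊗[F] B →ₐ[F] B :=
  (Algebra.TensorProduct.lid F B).toAlgHom.comp (Algebra.TensorProduct.map φ (AlgHom.id F B))

theorem auxPtB_apply {A B : Type u} [CommRing A] [Algebra F A] [CommRing B] [Algebra F B]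
    (φ : A →ₐ[F] F) (x : A ⊗[F] B) :
    auxPtB φ x = TensorProduct.lid F B (LinearMap.rTensor B φ.toLinearMap x) := by
  induction x using TensorProduct.induction_on with
  | zero => simp
  | tmul a b => simp [auxPtB]
  | add u v hu hv => simp only [map_add, hu, hv]

/-- The `F`-point evaluation map `A ⊗ B → A`, as an algebra morphism. -/
noncomputable def auxPtA {A B : Type u} [CommRing A] [Algebra F A] [CommRing B] [Algebra F B]
    (ψ : B →ₐ[F] F) : A ⊗[F] B →ₐ[F] A :=
  ((Algebra.TensorProduct.lid F A).toAlgHom.comp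
    (Algebra.TensorProduct.map ψ (AlgHom.id F A))).comp
      (Algebra.TensorProduct.comm F A B).toAlgHom

theorem auxPtA_apply {A B : Type u} [CommRing A] [Algebra F A] [CommRing B] [Algebra F B]
    (ψ : B →ₐ[F] F) (x : A ⊗[F] B) :
    auxPtA ψ x = TensorProduct.lid F A
      (LinearMap.rTensor A ψ.toLinearMap ((TensorProduct.comm F A B) x)) := by
  induction x using TensorProduct.induction_on with
  | zero => simp
  | tmul a b => simp [auxPtA]
  | add u v hu hv => simp only [map_add, hu, hv]

end Aux

/-- Let `F` be an algebraically closed field and `G` a subfunctor of the identity on the category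
of finitely generated commutative unital reduced `F`-algebras (assigning to each such algebra `A`
a subalgebra `G A ⊆ A`, functorially).  Then for finitely generated commutative unital reduced
`A` and `B` one has `G(A ⊗ B) = G(A) ⊗ G(B)` inside `A ⊗ B`. -/
theorem stmt_18 {F : Type u} [Field F] [IsAlgClosed F]
    (G : ∀ (A : Type u) [CommRing A] [Algebra F A], Subalgebra F A)
    (hG : ∀ (A : Type u) [CommRing A] [Algebra F A] (B : Type u) [CommRing B] [Algebra F B],
      Algebra.FiniteType F A → IsReduced A → Algebra.FiniteType F B → IsReduced B →
      ∀ f : A →ₐ[F] B, ∀ a ∈ G A, f a ∈ G B)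
    (A B : Type u) [CommRing A] [Algebra F A] [CommRing B] [Algebra F B]
    [Algebra.FiniteType F A] [IsReduced A] [Algebra.FiniteType F B] [IsReduced B] :
    Subalgebra.toSubmodule (G (A ⊗[F] B)) =
      LinearMap.range (TensorProduct.map
        ((Subalgebra.val (G A)).toLinearMap) ((Subalgebra.val (G B)).toLinearMap)) := by
  -- the tensor product is finitely generated
  haveI hT : Algebra.FiniteType F (A ⊗[F] B) :=
    Algebra.FiniteType.trans ‹Algebra.FiniteType F A› inferInstance
  -- the tensor product is reduced
  haveI hR : IsReduced (A ⊗[F] B) := by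
    constructor
    intro x hx
    have hmem : x ∈ LinearMap.range (LinearMap.lTensor A (⊥ : Submodule F B).subtype) := by
      refine aux_mem_range ⊥ x (fun φ => ?_)
      rw [← auxPtB_apply φ x]
      have : IsNilpotent (auxPtB φ x) := hx.map (auxPtB φ)
      simpa using this.eq_zero
    have hbot : (⊥ : Submodule F B).subtype = 0 := by
      ext ⟨y, hy⟩
      simpa using hy
    rw [hbot, LinearMap.lTensor_zero, LinearMap.range_zero, Submodule.mem_bot] at hmem
    exact hmem
  set V : Submodule F A := Subalgebra.toSubmodule (G A)
  set W : Submodule F B := Subalgebra.toSubmodule (G B)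
  apply le_antisymm
  · -- G(A ⊗ B) ⊆ G(A) ⊗ G(B)
    intro c hc
    rw [Subalgebra.mem_toSubmodule] at hc
    have h1 : c ∈ LinearMap.range (LinearMap.lTensor A W.subtype) := by
      refine aux_mem_range W c (fun φ => ?_)
      rw [← auxPtB_apply φ c]
      exact (Subalgebra.mem_toSubmodule _).mpr
        (hG (A ⊗[F] B) B hT hR ‹_› ‹_› (auxPtB φ) c hc)
    have h2 : (TensorProduct.comm F A B) c ∈
        LinearMap.range (LinearMap.lTensor B V.subtype) := by
      refine aux_mem_range V _ (fun ψ => ?_)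
      rw [← auxPtA_apply ψ c]
      exact (Subalgebra.mem_toSubmodule _).mpr
        (hG (A ⊗[F] B) A hT hR ‹_› ‹_› (auxPtA ψ) c hc)
    have h2' : c ∈ LinearMap.range (LinearMap.rTensor B V.subtype) := by
      obtain ⟨e, he⟩ := h2
      refine ⟨(TensorProduct.comm F B ↥V) e, ?_⟩
      have hcomm : ∀ y : B ⊗[F] ↥V,
          LinearMap.rTensor B V.subtype ((TensorProduct.comm F B ↥V) y)
            = (TensorProduct.comm F A B).symm (LinearMap.lTensor B V.subtype y) := by
        intro y
        induction y using TensorProduct.induction_on with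
        | zero => simp only [map_zero]
        | tmul u v => simp
        | add u v hu hv => simp only [map_add, hu, hv]
      rw [hcomm, he]
      simp
    have h3 := aux_inter V W h1 h2'
    obtain ⟨e, he⟩ := h3
    rw [← he]
    clear he hc h1 h2 h2'
    induction e using TensorProduct.induction_on with
    | zero => rw [map_zero]; exact zero_mem _
    | tmul v w =>
        refine ⟨(⟨v.1, (Subalgebra.mem_toSubmodule _).mp v.2⟩ : G A) ⊗ₜ
          (⟨w.1, (Subalgebra.mem_toSubmodule _).mp w.2⟩ : G B), ?_⟩
        simp
    | add u v hu hv =>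
        rw [map_add]
        exact add_mem hu hv
  · -- G(A) ⊗ G(B) ⊆ G(A ⊗ B)
    rintro _ ⟨e, rfl⟩
    induction e using TensorProduct.induction_on with
    | zero => rw [map_zero]; exact zero_mem _
    | tmul x y =>
        rw [Subalgebra.mem_toSubmodule]
        have hx : Algebra.TensorProduct.includeLeft (S := F) (x : A) ∈ G (A ⊗[F] B) :=
          hG A (A ⊗[F] B) ‹_› ‹_› hT hR Algebra.TensorProduct.includeLeft x.1 x.2
        have hy : Algebra.TensorProduct.includeRight (y : B) ∈ G (A ⊗[F] B) :=
          hG B (A ⊗[F] B) ‹_› ‹_› hT hR Algebra.TensorProduct.includeRight y.1 y.2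
        have hmul := mul_mem hx hy
        have heq : (Algebra.TensorProduct.includeLeft (S := F) (x : A)) *
            (Algebra.TensorProduct.includeRight (y : B)) = (x : A) ⊗ₜ[F] (y : B) := by
          simp [Algebra.TensorProduct.includeLeft_apply,
            Algebra.TensorProduct.includeRight_apply, Algebra.TensorProduct.tmul_mul_tmul]
        rw [heq] at hmul
        simpa using hmul
    | add u v hu hv =>
        rw [map_add]
        exact add_mem hu hv
end
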